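/- arXiv:1305.4581 — 5 statements merged into one kernel-verified Lean document; each statement's English description precedes it below -/
import Mathlib

section
/- Let a, b, c be real numbers in [-1,1] with 1 + a ≥ b + c. Then for every odd positive integer t, 1 + a^t ≥ b^t + c^t. -/
open Finset in
lemma key_lemma (b c : ℝ) (t : ℕ) (ht : Odd t)
    (hb' : b ≤ 1) (hcb : |c| ≤ b) (hbc0 : 0 ≤ b + c) :
    b ^ t + c ^ t ≤ 1 + (b + c - 1) ^ t := by
  set d : ℝ := b + c - 1 with hd
  have hb0 : 0 ≤ b := le_trans (abs_nonneg c) hcb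
  have hd1 : |d| ≤ 1 := by
    rw [abs_le]
    constructor <;> [linarith; linarith [abs_le.mp hcb]]
  have hsum : ∑ i ∈ range t, c ^ i * d ^ (t - 1 - i) ≤ ∑ i ∈ range t, b ^ i := by
    refine Finset.sum_le_sum fun i _ => ?_
    calc c ^ i * d ^ (t - 1 - i) ≤ |c ^ i * d ^ (t - 1 - i)| := le_abs_self _
      _ = |c| ^ i * |d| ^ (t - 1 - i) := by rw [abs_mul, abs_pow, abs_pow]
      _ ≤ b ^ i * 1 := by
          apply mul_le_mul (pow_le_pow_left₀ (abs_nonneg c) hcb i)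
            (pow_le_one₀ (abs_nonneg d) hd1) (by positivity) (by positivity)
      _ = b ^ i := mul_one _
  have h1 : (∑ i ∈ range t, b ^ i) * (b - 1) = b ^ t - 1 := geom_sum_mul b t
  have h2 : (∑ i ∈ range t, c ^ i * d ^ (t - 1 - i)) * (c - d) = c ^ t - d ^ t :=
    geom_sum₂_mul c d t
  have hcd : c - d = 1 - b := by rw [hd]; ring
  have hb1 : 0 ≤ 1 - b := by linarith
  have hmul := mul_le_mul_of_nonneg_right hsum hb1
  have e1 : (∑ i ∈ range t, c ^ i * d ^ (t - 1 - i)) * (1 - b) = c ^ t - d ^ t := by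
    rw [← hcd]; exact h2
  have e2 : (∑ i ∈ range t, b ^ i) * (1 - b) = 1 - b ^ t := by linear_combination -h1
  rw [e1, e2] at hmul
  linarith

theorem stmt_0 (a b c : ℝ) (ha : -1 ≤ a) (ha' : a ≤ 1) (hb : -1 ≤ b) (hb' : b ≤ 1)
    (hc : -1 ≤ c) (hc' : c ≤ 1) (habc : 1 + a ≥ b + c)
    (t : ℕ) (ht : Odd t) (htpos : 0 < t) :
    1 + a ^ t ≥ b ^ t + c ^ t := by
  have hmono : Monotone fun x : ℝ => x ^ t := ht.strictMono_pow.monotone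
  have hane : (-1 : ℝ) ^ t ≤ a ^ t := hmono ha
  rw [ht.neg_one_pow] at hane
  rcases le_total (b + c) 0 with h | h
  · -- b + c ≤ 0 : b^t + c^t ≤ 0 ≤ 1 + a^t
    have hbc : b ≤ -c := by linarith
    have : b ^ t ≤ (-c) ^ t := hmono hbc
    rw [ht.neg_pow] at this
    linarith
  · -- b + c ≥ 0
    rcases le_total c b with hcb | hcb
    · have habs : |c| ≤ b := abs_le.mpr ⟨by linarith, hcb⟩
      have hk := key_lemma b c t ht hb' habs h
      have : (b + c - 1) ^ t ≤ a ^ t := hmono (by linarith)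
      linarith
    · have habs : |b| ≤ c := abs_le.mpr ⟨by linarith, hcb⟩
      have hk := key_lemma c b t ht hc' habs (by linarith)
      have : (c + b - 1) ^ t ≤ a ^ t := hmono (by linarith)
      linarith
end

section
/- Let η, λ and θ₁,…,θ_N be non-negative reals with ∑_{i=1}^N θ_i² ≤ 1 and η ≤ θ_i ≤ λ for all i. Then ∑_{i=1}^N ((θ_i + η)^8 − θ_i^8) ≤ ∑_{l=1}^{6} C(8,l) λ^{6−l} η^l + 9 η^6. -/
lemma key_pt (η lam θ : ℝ) (hη : 0 ≤ η) (h1 : η ≤ θ) (h2 : θ ≤ lam) :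
    (θ + η) ^ 8 - θ ^ 8 ≤
      (8 * lam ^ 5 * η + 28 * lam ^ 4 * η ^ 2 + 56 * lam ^ 3 * η ^ 3 +
        70 * lam ^ 2 * η ^ 4 + 56 * lam * η ^ 5 + 28 * η ^ 6 + 9 * η ^ 6) * θ ^ 2 := by
  have h0 : 0 ≤ θ := le_trans hη h1
  have p5 : θ ^ 5 ≤ lam ^ 5 := pow_le_pow_left₀ h0 h2 5
  have p4 : θ ^ 4 ≤ lam ^ 4 := pow_le_pow_left₀ h0 h2 4
  have p3 : θ ^ 3 ≤ lam ^ 3 := pow_le_pow_left₀ h0 h2 3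
  have p2 : θ ^ 2 ≤ lam ^ 2 := pow_le_pow_left₀ h0 h2 2
  have p1 : θ ≤ lam := h2
  have q1 : η ≤ θ := h1
  have q2 : η ^ 2 ≤ θ ^ 2 := pow_le_pow_left₀ hη h1 2
  have n1 : (0:ℝ) ≤ η * θ ^ 2 := by positivity
  have n2 : (0:ℝ) ≤ η ^ 2 * θ ^ 2 := by positivity
  have n3 : (0:ℝ) ≤ η ^ 3 * θ ^ 2 := by positivity
  have n4 : (0:ℝ) ≤ η ^ 4 * θ ^ 2 := by positivity
  have n5 : (0:ℝ) ≤ η ^ 5 * θ ^ 2 := by positivity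
  have n6 : (0:ℝ) ≤ η ^ 6 * θ := by positivity
  have n7 : (0:ℝ) ≤ η ^ 6 := by positivity
  nlinarith [mul_le_mul_of_nonneg_right p5 n1, mul_le_mul_of_nonneg_right p4 n2,
    mul_le_mul_of_nonneg_right p3 n3, mul_le_mul_of_nonneg_right p2 n4,
    mul_le_mul_of_nonneg_right p1 n5, mul_le_mul_of_nonneg_right q1 n6,
    mul_le_mul_of_nonneg_right q2 n7]

theorem stmt_1 (N : ℕ) (hN : 0 < N) (η lam : ℝ) (θ : Fin N → ℝ)
    (hη : 0 ≤ η) (hlam : 0 ≤ lam)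
    (hsum : ∑ i, θ i ^ 2 ≤ 1)
    (hlb : ∀ i, η ≤ θ i) (hub : ∀ i, θ i ≤ lam) :
    ∑ i, ((θ i + η) ^ 8 - θ i ^ 8) ≤
      (∑ l ∈ Finset.Icc 1 6, (Nat.choose 8 l : ℝ) * lam ^ (6 - l) * η ^ l) + 9 * η ^ 6 := by
  have hK : (∑ l ∈ Finset.Icc 1 6, (Nat.choose 8 l : ℝ) * lam ^ (6 - l) * η ^ l) + 9 * η ^ 6
      = 8 * lam ^ 5 * η + 28 * lam ^ 4 * η ^ 2 + 56 * lam ^ 3 * η ^ 3 +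
        70 * lam ^ 2 * η ^ 4 + 56 * lam * η ^ 5 + 28 * η ^ 6 + 9 * η ^ 6 := by
    rw [show Finset.Icc 1 6 = ({1,2,3,4,5,6} : Finset ℕ) by rfl]
    norm_num [Finset.sum_insert, Finset.mem_insert]
    norm_num [Nat.choose]
    ring
  rw [hK]
  set K : ℝ := 8 * lam ^ 5 * η + 28 * lam ^ 4 * η ^ 2 + 56 * lam ^ 3 * η ^ 3 +
        70 * lam ^ 2 * η ^ 4 + 56 * lam * η ^ 5 + 28 * η ^ 6 + 9 * η ^ 6 with hKdef
  have hKnn : 0 ≤ K := by rw [hKdef]; positivity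
  calc ∑ i, ((θ i + η) ^ 8 - θ i ^ 8) ≤ ∑ i, K * θ i ^ 2 := by
        apply Finset.sum_le_sum
        intro i _
        exact key_pt η lam (θ i) hη (hlb i) (hub i)
    _ = K * ∑ i, θ i ^ 2 := by rw [Finset.mul_sum]
    _ ≤ K * 1 := mul_le_mul_of_nonneg_left hsum hKnn
    _ = K := mul_one K
end

section
/- Let S ⊆ {−1,1}^N have relative size 1/N and let 0 < η < 1/2. If x is uniform on {−1,1}^N and y is obtained from x by flipping each bit independently with probability η, then Pr[y ∈ S | x ∈ S] ≤ N^{−(η+η²)}. -/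
open Real

noncomputable def gA (p : ℝ) : ℝ → ℝ := fun e => (1+e)^p + (1-e)^p - p*(p-1)*e^2
noncomputable def gA' (p : ℝ) : ℝ → ℝ :=
  fun e => p*(1+e)^(p-1) - p*(1-e)^(p-1) - 2*(p*(p-1))*e
noncomputable def gA'' (p : ℝ) : ℝ → ℝ :=
  fun e => p*(p-1)*(1+e)^(p-2) + p*(p-1)*(1-e)^(p-2) - 2*(p*(p-1))

lemma hasDerivAt_gA (p : ℝ) (hp1 : 1 < p) (e : ℝ) : HasDerivAt (gA p) (gA' p e) e := by
  have h1 : HasDerivAt (fun e : ℝ => (1+e)^p) (p*(1+e)^(p-1)) e := by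
    have hinner : HasDerivAt (fun e : ℝ => 1 + e) 1 e := (hasDerivAt_id e).const_add 1
    have := (Real.hasDerivAt_rpow_const (x := 1+e) (p := p) (Or.inr hp1.le)).comp e hinner
    simpa [Function.comp_def] using this
  have h2 : HasDerivAt (fun e : ℝ => (1-e)^p) (-(p*(1-e)^(p-1))) e := by
    have hinner : HasDerivAt (fun e : ℝ => 1 - e) (-1) e := ((hasDerivAt_id e).neg).const_add 1
    have := (Real.hasDerivAt_rpow_const (x := 1-e) (p := p) (Or.inr hp1.le)).comp e hinner
    simpa [Function.comp_def] using this
  have h3 : HasDerivAt (fun e : ℝ => p*(p-1)*e^2) (p*(p-1)*(2*e)) e := by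
    simpa using ((hasDerivAt_pow 2 e).const_mul (p*(p-1)))
  have := (h1.add h2).sub h3
  refine this.congr_deriv ?_
  unfold gA'
  ring

lemma hasDerivAt_gA' (p : ℝ) (hp1 : 1 < p) {e : ℝ} (he : e ∈ Set.Ioo (0:ℝ) 1) :
    HasDerivAt (gA' p) (gA'' p e) e := by
  obtain ⟨he0, he1⟩ := he
  have h1 : HasDerivAt (fun e : ℝ => (1+e)^(p-1)) ((p-1)*(1+e)^(p-2)) e := by
    have hinner : HasDerivAt (fun e : ℝ => 1 + e) 1 e := (hasDerivAt_id e).const_add 1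
    have := (Real.hasDerivAt_rpow_const (x := 1+e) (p := p-1)
      (Or.inl (by positivity))).comp e hinner
    simpa [Function.comp_def, show p - 1 - 1 = p - 2 by ring] using this
  have h2 : HasDerivAt (fun e : ℝ => (1-e)^(p-1)) (-((p-1)*(1-e)^(p-2))) e := by
    have hinner : HasDerivAt (fun e : ℝ => 1 - e) (-1) e := ((hasDerivAt_id e).neg).const_add 1
    have h1e : (0:ℝ) < 1 - e := by linarith
    have := (Real.hasDerivAt_rpow_const (x := 1-e) (p := p-1)
      (Or.inl h1e.ne')).comp e hinner
    simpa [Function.comp_def, show p - 1 - 1 = p - 2 by ring] using this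
  have h3 : HasDerivAt (fun e : ℝ => 2*(p*(p-1))*e) (2*(p*(p-1))) e := by
    simpa using (hasDerivAt_id e).const_mul (2*(p*(p-1)))
  have := ((h1.const_mul p).sub (h2.const_mul p)).sub h3
  refine this.congr_deriv ?_
  unfold gA''
  ring

lemma lemA {p : ℝ} (hp1 : 1 < p) (hp2 : p ≤ 2) {ε : ℝ} (hε0 : 0 ≤ ε) (hε1 : ε ≤ 1) :
    2 + p * (p - 1) * ε ^ 2 ≤ (1 + ε) ^ p + (1 - ε) ^ p := by
  -- g'' ≥ 0 on (0,1)
  have hg''nonneg : ∀ e ∈ Set.Ioo (0:ℝ) 1, 0 ≤ gA'' p e := by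
    intro e ⟨he0, he1⟩
    have h1e : (0:ℝ) < 1 - e := by linarith
    have h1e' : (0:ℝ) < 1 + e := by linarith
    set c := (p-2)/2 with hc
    have hc0 : c ≤ 0 := by rw [hc]; linarith
    have hprod : (1:ℝ) ≤ ((1+e)*(1-e))^c := by
      apply Real.one_le_rpow_of_pos_of_le_one_of_nonpos (by positivity) _ hc0
      nlinarith
    have hmul : ((1+e)*(1-e))^c = (1+e)^c * (1-e)^c := Real.mul_rpow (by positivity) h1e.le
    have hA : (1+e)^c * (1+e)^c = (1+e)^(p-2) := by
      rw [← Real.rpow_add h1e']; congr 1; rw [hc]; ring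
    have hB : (1-e)^c * (1-e)^c = (1-e)^(p-2) := by
      rw [← Real.rpow_add h1e]; congr 1; rw [hc]; ring
    have hkey : 2 ≤ (1+e)^(p-2) + (1-e)^(p-2) := by
      nlinarith [sq_nonneg ((1+e)^c - (1-e)^c), hprod, hmul, hA, hB]
    have hpp : 0 < p*(p-1) := by nlinarith
    unfold gA''
    nlinarith
  -- g' monotone on [0,1]
  have hcont' : ContinuousOn (gA' p) (Set.Icc 0 1) := by
    intro e _
    apply ContinuousAt.continuousWithinAt
    have c1 : ContinuousAt (fun e : ℝ => (1+e)^(p-1)) e := by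
      exact (Real.continuousAt_rpow_const _ _ (Or.inr (by linarith))).comp
        (by fun_prop)
    have c2 : ContinuousAt (fun e : ℝ => (1-e)^(p-1)) e := by
      exact (Real.continuousAt_rpow_const _ _ (Or.inr (by linarith))).comp
        (by fun_prop)
    unfold gA'
    fun_prop
  have hmono' : MonotoneOn (gA' p) (Set.Icc 0 1) := by
    apply monotoneOn_of_deriv_nonneg (convex_Icc 0 1) hcont'
    · intro e he
      rw [interior_Icc] at he
      exact (hasDerivAt_gA' p hp1 he).differentiableAt.differentiableWithinAt
    · intro e he
      rw [interior_Icc] at he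
      rw [(hasDerivAt_gA' p hp1 he).deriv]
      exact hg''nonneg e he
  have hg'0 : gA' p 0 = 0 := by
    unfold gA'
    norm_num
  have hg'nonneg : ∀ e ∈ Set.Icc (0:ℝ) 1, 0 ≤ gA' p e := by
    intro e he
    have := hmono' (Set.left_mem_Icc.mpr zero_le_one) he he.1
    rwa [hg'0] at this
  have hmono : MonotoneOn (gA p) (Set.Icc 0 1) := by
    apply monotoneOn_of_deriv_nonneg (convex_Icc 0 1)
    · exact fun e _ => (hasDerivAt_gA p hp1 e).continuousAt.continuousWithinAt
    · intro e he
      exact (hasDerivAt_gA p hp1 e).differentiableAt.differentiableWithinAt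
    · intro e he
      rw [interior_Icc] at he
      rw [(hasDerivAt_gA p hp1 e).deriv]
      exact hg'nonneg e (Set.mem_Icc_of_Ioo he)
  have h0 : gA p 0 = 2 := by
    unfold gA
    norm_num
  have := hmono (Set.left_mem_Icc.mpr zero_le_one) (Set.mem_Icc.mpr ⟨hε0, hε1⟩) hε0
  rw [h0] at this
  unfold gA at this
  linarith

lemma lemB' {p : ℝ} (hp1 : 1 < p) (hp2 : p ≤ 2) {x y : ℝ} (hy : 0 ≤ y) (hxy : y ≤ x) :
    ((x+y)/2)^2 + (p-1)*((x-y)/2)^2 ≤ ((x^p + y^p)/2)^(2/p) := by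
  have hp0 : (0:ℝ) < p := by linarith
  rcases eq_or_lt_of_le (hy.trans hxy) with h0 | hx0
  · -- x = 0, hence y = 0
    have hx : x = 0 := h0.symm
    have hy0 : y = 0 := le_antisymm (hx ▸ hxy) hy
    subst hx; subst hy0
    rw [Real.zero_rpow hp0.ne']
    norm_num
    rw [Real.zero_rpow (by positivity)]
  · set μ := (x+y)/2 with hμdef
    have hμ : 0 < μ := by rw [hμdef]; linarith
    set ε := (x-y)/(x+y) with hεdef
    have hxy0 : 0 < x + y := by linarith
    have hε0 : 0 ≤ ε := by rw [hεdef]; apply div_nonneg (by linarith) hxy0.le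
    have hε1 : ε ≤ 1 := by rw [hεdef, div_le_one hxy0]; linarith
    have hx' : x = μ*(1+ε) := by rw [hμdef, hεdef]; field_simp; ring
    have hy' : y = μ*(1-ε) := by rw [hμdef, hεdef]; field_simp; ring
    have h1ε : 0 ≤ 1 + ε := by linarith
    have h1ε' : 0 ≤ 1 - ε := by linarith
    have hxp : x^p = μ^p * (1+ε)^p := by rw [hx', Real.mul_rpow hμ.le h1ε]
    have hyp : y^p = μ^p * (1-ε)^p := by rw [hy', Real.mul_rpow hμ.le h1ε']
    have hμp : (0:ℝ) < μ^p := Real.rpow_pos_of_pos hμ p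
    have hρnn : (0:ℝ) ≤ p - 1 := by linarith
    have hs : (0:ℝ) ≤ p*(p-1)/2*ε^2 := mul_nonneg (div_nonneg (mul_nonneg hp0.le hρnn) (by norm_num)) (sq_nonneg ε)
    have hone : (0:ℝ) ≤ 1 + p*(p-1)/2*ε^2 := by linarith
    have hA := lemA hp1 hp2 hε0 hε1
    have h1 : μ^p * (1 + p*(p-1)/2*ε^2) ≤ (x^p + y^p)/2 := by
      rw [hxp, hyp]
      have : μ^p * (2 + p*(p-1)*ε^2) ≤ μ^p * ((1+ε)^p + (1-ε)^p) :=
        mul_le_mul_of_nonneg_left hA hμp.le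
      nlinarith
    have hbern : 1 + (p-1)*ε^2 ≤ (1 + p*(p-1)/2*ε^2)^(2/p) := by
      have h2p : 1 ≤ 2/p := by rw [le_div_iff₀ hp0]; linarith
      have := one_add_mul_self_le_rpow_one_add (by linarith : (-1:ℝ) ≤ p*(p-1)/2*ε^2) h2p
      have heq : 2/p * (p*(p-1)/2*ε^2) = (p-1)*ε^2 := by field_simp
      linarith [heq ▸ this]
    have hmono : (μ^p * (1 + p*(p-1)/2*ε^2))^(2/p) ≤ ((x^p + y^p)/2)^(2/p) :=
      Real.rpow_le_rpow (mul_nonneg hμp.le hone) h1 (by positivity)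
    have hsplit : (μ^p * (1 + p*(p-1)/2*ε^2))^(2/p)
        = μ^2 * (1 + p*(p-1)/2*ε^2)^(2/p) := by
      rw [Real.mul_rpow (by positivity) hone]
      congr 1
      rw [← Real.rpow_natCast μ 2, ← Real.rpow_mul hμ.le]
      congr 1
      field_simp
      norm_num
    have hfin : μ^2 * (1 + (p-1)*ε^2) ≤ ((x^p + y^p)/2)^(2/p) := by
      calc μ^2 * (1 + (p-1)*ε^2) ≤ μ^2 * (1 + p*(p-1)/2*ε^2)^(2/p) := by
            apply mul_le_mul_of_nonneg_left hbern (by positivity)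
        _ = (μ^p * (1 + p*(p-1)/2*ε^2))^(2/p) := hsplit.symm
        _ ≤ _ := hmono
    have hμε : μ * ε = (x-y)/2 := by rw [hμdef, hεdef]; field_simp
    calc ((x+y)/2)^2 + (p-1)*((x-y)/2)^2 = μ^2 + (p-1)*(μ*ε)^2 := by rw [hμε]
      _ = μ^2 * (1 + (p-1)*ε^2) := by ring
      _ ≤ _ := hfin

lemma lemB {p : ℝ} (hp1 : 1 < p) (hp2 : p ≤ 2) {x y : ℝ} (hx : 0 ≤ x) (hy : 0 ≤ y) :
    ((x+y)/2)^2 + (p-1)*((x-y)/2)^2 ≤ ((x^p + y^p)/2)^(2/p) := by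
  rcases le_total y x with h | h
  · exact lemB' hp1 hp2 hy h
  · have := lemB' hp1 hp2 hx h
    have e1 : ((y+x)/2)^2 = ((x+y)/2)^2 := by ring
    have e2 : ((y-x)/2)^2 = ((x-y)/2)^2 := by ring
    have e3 : y^p + x^p = x^p + y^p := by ring
    rw [e1, e2, e3] at this
    exact this

lemma lemC {p : ℝ} (hp1 : 1 < p) (hp2 : p ≤ 2) {a b c d : ℝ}
    (ha : 0 ≤ a) (hb : 0 ≤ b) (hc : 0 ≤ c) (hd : 0 ≤ d) :
    ((a+b)/2)*((c+d)/2) + (p-1)*(((a-b)/2)*((c-d)/2))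
      ≤ ((a^p+b^p)/2)^(1/p) * ((c^p+d^p)/2)^(1/p) := by
  have hρ : (0:ℝ) ≤ p - 1 := by linarith
  set u := (a+b)/2
  set s := (a-b)/2
  set v := (c+d)/2
  set t := (c-d)/2
  have hB1 := lemB hp1 hp2 ha hb
  have hB2 := lemB hp1 hp2 hc hd
  set A := ((a^p+b^p)/2)^(2/p) with hAdef
  set B := ((c^p+d^p)/2)^(2/p) with hBdef
  have hApos : 0 ≤ A := by rw [hAdef]; positivity
  have hBpos : 0 ≤ B := by rw [hBdef]; positivity
  have step1 : u*v + (p-1)*(s*t) ≤ Real.sqrt ((u^2+(p-1)*s^2)*(v^2+(p-1)*t^2)) := by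
    rcases le_or_gt (u*v + (p-1)*(s*t)) 0 with h | h
    · exact h.trans (Real.sqrt_nonneg _)
    · rw [show u*v + (p-1)*(s*t) = Real.sqrt ((u*v + (p-1)*(s*t))^2) from
        (Real.sqrt_sq h.le).symm]
      apply Real.sqrt_le_sqrt
      nlinarith [mul_nonneg hρ (sq_nonneg (u*t - s*v))]
  have step2 : Real.sqrt ((u^2+(p-1)*s^2)*(v^2+(p-1)*t^2)) ≤ Real.sqrt A * Real.sqrt B := by
    rw [← Real.sqrt_mul hApos]
    apply Real.sqrt_le_sqrt
    apply mul_le_mul hB1 hB2 (by positivity) hApos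
  have hAs : Real.sqrt A = ((a^p+b^p)/2)^(1/p) := by
    rw [hAdef, Real.sqrt_eq_rpow, ← Real.rpow_mul (by positivity)]
    congr 1
    field_simp
  have hBs : Real.sqrt B = ((c^p+d^p)/2)^(1/p) := by
    rw [hBdef, Real.sqrt_eq_rpow, ← Real.rpow_mul (by positivity)]
    congr 1
    field_simp
  calc u*v + (p-1)*(s*t) ≤ Real.sqrt A * Real.sqrt B := step1.trans step2
    _ = _ := by rw [hAs, hBs]

lemma lemD {η : ℝ} (hη : 0 < η) (hη' : η < 1/2) {a b c d : ℝ}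
    (ha : 0 ≤ a) (hb : 0 ≤ b) (hc : 0 ≤ c) (hd : 0 ≤ d) :
    (1-η)*(a^(1/(2-2*η))*c^(1/(2-2*η))) + η*(a^(1/(2-2*η))*d^(1/(2-2*η)))
      + η*(b^(1/(2-2*η))*c^(1/(2-2*η))) + (1-η)*(b^(1/(2-2*η))*d^(1/(2-2*η)))
      ≤ (2:ℝ)^(1 - 2/(2-2*η)) * ((a+b)^(1/(2-2*η)) * (c+d)^(1/(2-2*η))) := by
  set p := 2-2*η with hpdef
  have hp1 : 1 < p := by rw [hpdef]; linarith
  have hp2 : p ≤ 2 := by rw [hpdef]; linarith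
  have hp0 : (0:ℝ) < p := by linarith
  set A := a^(1/p)
  set B := b^(1/p)
  set C := c^(1/p)
  set D := d^(1/p)
  have hA : 0 ≤ A := Real.rpow_nonneg ha _
  have hB : 0 ≤ B := Real.rpow_nonneg hb _
  have hC : 0 ≤ C := Real.rpow_nonneg hc _
  have hD : 0 ≤ D := Real.rpow_nonneg hd _
  have hAp : A^p = a := by
    rw [← Real.rpow_mul ha, one_div, inv_mul_cancel₀ hp0.ne', Real.rpow_one]
  have hBp : B^p = b := by
    rw [← Real.rpow_mul hb, one_div, inv_mul_cancel₀ hp0.ne', Real.rpow_one]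
  have hCp : C^p = c := by
    rw [← Real.rpow_mul hc, one_div, inv_mul_cancel₀ hp0.ne', Real.rpow_one]
  have hDp : D^p = d := by
    rw [← Real.rpow_mul hd, one_div, inv_mul_cancel₀ hp0.ne', Real.rpow_one]
  have h := lemC hp1 hp2 hA hB hC hD
  rw [hAp, hBp, hCp, hDp] at h
  have hexp : (1-η)*(A*C) + η*(A*D) + η*(B*C) + (1-η)*(B*D)
      = 2*(((A+B)/2)*((C+D)/2) + (p-1)*(((A-B)/2)*((C-D)/2))) := by
    rw [hpdef]; ring
  have h2 : (2:ℝ)^(1-2/p) * ((a+b)^(1/p) * (c+d)^(1/p))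
      = 2 * (((a+b)/2)^(1/p) * ((c+d)/2)^(1/p)) := by
    rw [Real.div_rpow (by linarith : (0:ℝ) ≤ a+b) (by norm_num : (0:ℝ) ≤ 2),
        Real.div_rpow (by linarith : (0:ℝ) ≤ c+d) (by norm_num : (0:ℝ) ≤ 2),
        Real.rpow_sub (by norm_num : (0:ℝ) < 2), Real.rpow_one]
    have h22 : (2:ℝ)^(2/p) = 2^(1/p) * 2^(1/p) := by
      rw [← Real.rpow_add (by norm_num : (0:ℝ) < 2)]; congr 1; ring
    have h1p : (0:ℝ) < (2:ℝ)^(1/p) := Real.rpow_pos_of_pos (by norm_num) _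
    rw [h22]
    field_simp
  rw [h2]
  linarith

lemma reindex_cons (n : ℕ) (F : (Fin (n+1) → Bool) → ℝ) :
    ∑ x, F x = ∑ b : Bool, ∑ z : Fin n → Bool, F (Fin.cons b z) := by
  rw [show (∑ x, F x) = ∑ bz : Bool × (Fin n → Bool), F (Fin.consEquiv (fun _ => Bool) bz) from
    (Fintype.sum_equiv (Fin.consEquiv (fun _ => Bool)) _ _ (fun bz => rfl)).symm,
    Fintype.sum_prod_type]
  rfl

lemma kernel_cons (n : ℕ) (η : ℝ) (b b' : Bool) (z w : Fin n → Bool) :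
    (∏ i, (if (Fin.cons b z : Fin (n+1) → Bool) i = (Fin.cons b' w : Fin (n+1) → Bool) i then 1-η else η))
      = (if b = b' then 1-η else η) * ∏ i, (if z i = w i then 1-η else η) := by
  rw [Fin.prod_univ_succ]
  simp

lemma key (η : ℝ) (hη : 0 < η) (hη' : η < 1/2) (n : ℕ) (f g : (Fin n → Bool) → ℝ)
    (hf : ∀ x, 0 ≤ f x) (hg : ∀ x, 0 ≤ g x) :
    ∑ x, ∑ y, f x * g y * ∏ i, (if x i = y i then 1-η else η)
      ≤ (∑ x, f x ^ (2-2*η)) ^ (1/(2-2*η)) * (∑ y, g y ^ (2-2*η)) ^ (1/(2-2*η))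
        * ((2:ℝ) ^ (1 - 2/(2-2*η))) ^ n := by
  have hp0 : (0:ℝ) < 2-2*η := by linarith
  induction n with
  | zero =>
      simp only [pow_zero, mul_one]
      rw [Fintype.sum_unique, Fintype.sum_unique, Fintype.sum_unique,
        Fintype.sum_unique]
      simp only [Finset.univ_eq_empty, Finset.prod_empty, mul_one]
      rw [← Real.rpow_mul (hf _), ← Real.rpow_mul (hg _),
        mul_one_div, div_self hp0.ne', Real.rpow_one, Real.rpow_one]
  | succ n ih =>
      set p := 2-2*η with hpdef
      set t := 1/p with htdef
      set Cn := ((2:ℝ) ^ (1 - 2/p)) ^ n with hCdef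
      have hCn : 0 ≤ Cn := by positivity
      -- restricted functions
      set F : Bool → (Fin n → Bool) → ℝ := fun b z => f (Fin.cons b z) with hF
      set G : Bool → (Fin n → Bool) → ℝ := fun b z => g (Fin.cons b z) with hG
      set P : Bool → ℝ := fun b => ∑ z, F b z ^ p with hP
      set Q : Bool → ℝ := fun b => ∑ z, G b z ^ p with hQ
      have hPnn : ∀ b, 0 ≤ P b := fun b => Finset.sum_nonneg fun z _ =>
        Real.rpow_nonneg (hf _) _
      have hQnn : ∀ b, 0 ≤ Q b := fun b => Finset.sum_nonneg fun z _ =>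
        Real.rpow_nonneg (hg _) _
      -- the inner double sums
      set R : Bool → Bool → ℝ := fun b b' =>
        ∑ z, ∑ w, F b z * G b' w * ∏ i, (if z i = w i then 1-η else η) with hR
      have hRbound : ∀ b b', R b b' ≤ (P b)^t * (Q b')^t * Cn := fun b b' =>
        ih (F b) (G b') (fun z => hf _) (fun w => hg _)
      -- rewrite the LHS
      have hLHS : ∑ x, ∑ y, f x * g y * ∏ i, (if x i = y i then 1-η else η)
          = ∑ b : Bool, ∑ b' : Bool, (if b = b' then 1-η else η) * R b b' := by
        rw [reindex_cons n (fun x => ∑ y, f x * g y * ∏ i, (if x i = y i then 1-η else η))]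
        have inner : ∀ b (z : Fin n → Bool),
            (∑ y, f (Fin.cons b z) * g y * ∏ i, (if (Fin.cons b z : Fin (n+1) → Bool) i = y i then 1-η else η))
            = ∑ b' : Bool, ∑ w, f (Fin.cons b z) * g (Fin.cons b' w)
                * ((if b = b' then 1-η else η) * ∏ i, (if z i = w i then 1-η else η)) := by
          intro b z
          rw [reindex_cons n (fun y => f (Fin.cons b z) * g y
            * ∏ i, (if (Fin.cons b z : Fin (n+1) → Bool) i = y i then 1-η else η))]
          refine Finset.sum_congr rfl fun b' _ => Finset.sum_congr rfl fun w _ => ?_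
          rw [kernel_cons]
        calc ∑ b : Bool, ∑ z, (∑ y, f (Fin.cons b z) * g y
                * ∏ i, (if (Fin.cons b z : Fin (n+1) → Bool) i = y i then 1-η else η))
            = ∑ b : Bool, ∑ z, ∑ b' : Bool, ∑ w, f (Fin.cons b z) * g (Fin.cons b' w)
                * ((if b = b' then 1-η else η) * ∏ i, (if z i = w i then 1-η else η)) := by
              exact Finset.sum_congr rfl fun b _ => Finset.sum_congr rfl fun z _ => inner b z
          _ = ∑ b : Bool, ∑ b' : Bool, (if b = b' then 1-η else η) * R b b' := by
              refine Finset.sum_congr rfl fun b _ => ?_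
              rw [Finset.sum_comm]
              refine Finset.sum_congr rfl fun b' _ => ?_
              rw [hR]
              simp only [Finset.mul_sum]
              refine Finset.sum_congr rfl fun z _ => Finset.sum_congr rfl fun w _ => ?_
              ring
      -- rewrite the norms
      have hPf : ∑ x, f x ^ p = P false + P true := by
        rw [reindex_cons n (fun x => f x ^ p), Fintype.sum_bool]
        simp only [hP, hF]
        ring
      have hQg : ∑ y, g y ^ p = Q false + Q true := by
        rw [reindex_cons n (fun y => g y ^ p), Fintype.sum_bool]
        simp only [hQ, hG]
        ring
      rw [hLHS, hPf, hQg]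
      have hsum : ∑ b : Bool, ∑ b' : Bool, (if b = b' then 1-η else η) * R b b'
          = (1-η) * R false false + η * R false true + η * R true false
            + (1-η) * R true true := by
        simp [Fintype.sum_bool]
        ring
      rw [hsum]
      have hstep : (1-η) * R false false + η * R false true + η * R true false
            + (1-η) * R true true
          ≤ ((1-η)*((P false)^t*(Q false)^t) + η*((P false)^t*(Q true)^t)
            + η*((P true)^t*(Q false)^t) + (1-η)*((P true)^t*(Q true)^t)) * Cn := by
        have h1 : (0:ℝ) ≤ 1-η := by linarith
        have e1 := hRbound false false
        have e2 := hRbound false true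
        have e3 := hRbound true false
        have e4 := hRbound true true
        nlinarith [mul_le_mul_of_nonneg_left e1 h1, mul_le_mul_of_nonneg_left e2 hη.le,
          mul_le_mul_of_nonneg_left e3 hη.le, mul_le_mul_of_nonneg_left e4 h1]
      have hD := lemD hη hη' (hPnn false) (hPnn true) (hQnn false) (hQnn true)
      calc (1-η) * R false false + η * R false true + η * R true false + (1-η) * R true true
          ≤ ((1-η)*((P false)^t*(Q false)^t) + η*((P false)^t*(Q true)^t)
            + η*((P true)^t*(Q false)^t) + (1-η)*((P true)^t*(Q true)^t)) * Cn := hstep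
        _ ≤ ((2:ℝ)^(1 - 2/p) * ((P false + P true)^t * (Q false + Q true)^t)) * Cn := by
            apply mul_le_mul_of_nonneg_right _ hCn
            exact hD
        _ = (P false + P true)^t * (Q false + Q true)^t * ((2:ℝ)^(1 - 2/p))^(n+1) := by
            rw [hCdef]
            ring

theorem stmt_8 (N : ℕ) (hN : 0 < N) (S : Finset (Fin N → Bool))
    (hS : (S.card : ℝ) * N = 2 ^ N)
    (η : ℝ) (hη : 0 < η) (hη' : η < 1 / 2) :
    -- `Pr[y ∈ S | x ∈ S] = N · Pr[x ∈ S ∧ y ∈ S]` since `Pr[x ∈ S] = 1/N`,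
    -- where the joint density of the η-noisy pair `(x,y)` is
    -- `2^{-N} ∏ᵢ ((1-η) if xᵢ = yᵢ else η)`.
    (N : ℝ) * ∑ x ∈ S, ∑ y ∈ S,
        (1 / (2 : ℝ) ^ N) * ∏ i, (if x i = y i then 1 - η else η)
      ≤ (N : ℝ) ^ (-(η + η ^ 2)) := by
  set p := 2-2*η with hpdef
  set t := 1/p with htdef
  have hp0 : (0:ℝ) < p := by rw [hpdef]; linarith
  have hNpos : (0:ℝ) < N := by exact_mod_cast hN
  have hN1 : (1:ℝ) ≤ N := by exact_mod_cast hN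
  set f : (Fin N → Bool) → ℝ := fun x => if x ∈ S then (1:ℝ) else 0 with hfdef
  have hfnn : ∀ x, 0 ≤ f x := fun x => by rw [hfdef]; positivity
  set K : (Fin N → Bool) → (Fin N → Bool) → ℝ :=
    fun x y => ∏ i, (if x i = y i then 1-η else η) with hKdef
  have hind : ∀ A : (Fin N → Bool) → ℝ,
      ∑ x, (if x ∈ S then (1:ℝ) else 0) * A x = ∑ x ∈ S, A x := by
    intro A
    rw [Finset.sum_congr rfl (fun x _ => by rw [ite_mul, one_mul, zero_mul]),
      Finset.sum_ite_mem, Finset.univ_inter]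
  have hsum_eq : ∑ x, ∑ y, f x * f y * K x y = ∑ x ∈ S, ∑ y ∈ S, K x y := by
    have h1 : ∑ x, ∑ y, f x * f y * K x y = ∑ x, f x * ∑ y, f y * K x y := by
      refine Finset.sum_congr rfl fun x _ => ?_
      rw [Finset.mul_sum]
      exact Finset.sum_congr rfl fun y _ => by ring
    rw [h1, hfdef, hind (fun x => ∑ y, f y * K x y)]
    exact Finset.sum_congr rfl fun x _ => hind (fun y => K x y)
  have hnorm : ∑ x, f x ^ p = (S.card : ℝ) := by
    have h1 : ∀ x, f x ^ p = if x ∈ S then (1:ℝ) else 0 := by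
      intro x
      rw [hfdef]
      by_cases h : x ∈ S <;> simp [h, Real.one_rpow, Real.zero_rpow hp0.ne']
    rw [Finset.sum_congr rfl (fun x _ => h1 x), Finset.sum_ite_mem, Finset.univ_inter,
      Finset.sum_const, nsmul_eq_mul, mul_one]
  have hkey := key η hη hη' N f f hfnn hfnn
  rw [hsum_eq, hnorm] at hkey
  have hLHS : ∑ x ∈ S, ∑ y ∈ S, (1 / (2:ℝ)^N) * K x y
      = (1/(2:ℝ)^N) * ∑ x ∈ S, ∑ y ∈ S, K x y := by
    rw [Finset.mul_sum]
    refine Finset.sum_congr rfl fun x _ => ?_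
    rw [Finset.mul_sum]
  have hcard : (S.card : ℝ) = (2:ℝ)^N / N := by
    rw [eq_div_iff hNpos.ne']; exact hS
  have hfactor : (0:ℝ) ≤ (N:ℝ) * (1/(2:ℝ)^N) := by positivity
  have hstep : (N : ℝ) * ∑ x ∈ S, ∑ y ∈ S, (1 / (2:ℝ)^N) * K x y
      ≤ (N:ℝ) * ((1/(2:ℝ)^N) *
        ((S.card:ℝ)^t * (S.card:ℝ)^t * ((2:ℝ)^(1-2/p))^N)) := by
    rw [hLHS, ← mul_assoc, ← mul_assoc]
    exact mul_le_mul_of_nonneg_left hkey hfactor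
  have heq : (N:ℝ) * ((1/(2:ℝ)^N) *
        ((S.card:ℝ)^t * (S.card:ℝ)^t * ((2:ℝ)^(1-2/p))^N)) = (N:ℝ)^(1-2*t) := by
    rw [hcard]
    rw [Real.div_rpow (by positivity) hNpos.le]
    rw [← Real.rpow_natCast ((2:ℝ)^(1-2/p)) N, ← Real.rpow_mul (by norm_num : (0:ℝ) ≤ 2)]
    rw [← Real.rpow_natCast (2:ℝ) N]
    rw [← Real.rpow_mul (by norm_num : (0:ℝ) ≤ 2)]
    rw [one_div ((2:ℝ)^(N:ℝ)), ← Real.rpow_neg (by norm_num : (0:ℝ) ≤ 2)]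
    rw [div_mul_div_comm, ← Real.rpow_add (by norm_num : (0:ℝ) < 2),
      ← Real.rpow_add hNpos]
    have h2t : 2/p = 2*t := by rw [htdef]; ring
    rw [h2t]
    calc (N:ℝ) * ((2:ℝ) ^ (-(N:ℝ)) * ((2:ℝ) ^ ((N:ℝ)*t + (N:ℝ)*t) * (((N:ℝ)) ^ (t+t))⁻¹
            * (2:ℝ) ^ ((1 - 2*t) * (N:ℝ))))
        = (N:ℝ) * (((N:ℝ))^(t+t))⁻¹ * ((2:ℝ)^(-(N:ℝ)) * (2:ℝ)^((N:ℝ)*t + (N:ℝ)*t)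
            * (2:ℝ)^((1-2*t)*(N:ℝ))) := by ring
      _ = (N:ℝ) * (((N:ℝ))^(t+t))⁻¹
            * (2:ℝ)^(-(N:ℝ) + ((N:ℝ)*t + (N:ℝ)*t) + (1-2*t)*(N:ℝ)) := by
          rw [← Real.rpow_add (by norm_num : (0:ℝ) < 2),
            ← Real.rpow_add (by norm_num : (0:ℝ) < 2)]
      _ = (N:ℝ) * (((N:ℝ))^(t+t))⁻¹ := by
          rw [show -(N:ℝ) + ((N:ℝ)*t + (N:ℝ)*t) + (1-2*t)*(N:ℝ) = 0 by ring,
            Real.rpow_zero, mul_one]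
      _ = (N:ℝ)^(1:ℝ) * (((N:ℝ))^(t+t))⁻¹ := by rw [Real.rpow_one]
      _ = (N:ℝ)^(1-2*t) := by
          rw [← Real.rpow_neg hNpos.le, ← Real.rpow_add hNpos]
          congr 1
          ring
  have hexp : 1-2*t ≤ -(η+η^2) := by
    have h2 : (1+(η+η^2)) * p ≤ 2 := by rw [hpdef]; nlinarith
    have h3 : 1+(η+η^2) ≤ 2/p := (le_div_iff₀ hp0).mpr h2
    have h4 : 2*t = 2/p := by rw [htdef]; ring
    linarith
  calc (N : ℝ) * ∑ x ∈ S, ∑ y ∈ S, (1 / (2:ℝ)^N) * K x y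
      ≤ (N:ℝ)^(1-2*t) := heq ▸ hstep
    _ ≤ (N:ℝ)^(-(η+η^2)) := Real.rpow_le_rpow_of_exponent_le hN1 hexp
end

section
/- Let {v_i}_{i=1}^N and {w_j}_{j=1}^N be orthonormal bases of ℝ^N such that ⟨v_i, w_i⟩ = 1−η for all i (0 ≤ η ≤ 1), and let x, y ∈ {−1,1}^N. Define V = (1/√N)∑_i x_i v_i^{⊗8} and W = (1/√N)∑_i y_i w_i^{⊗8}. Then (1−η)^8 (1 − 2Δ(x,y)) − (2η)^4 ≤ ⟨V, W⟩ ≤ (1−η)^8 (1 − 2Δ(x,y)) + (2η)^4, where Δ(x,y) is the fraction of coordinates where x and y differ. -/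
open scoped RealInnerProductSpace

set_option maxHeartbeats 1000000 in
theorem stmt_11 (N : ℕ) (hN : 0 < N) (v w : Fin N → EuclideanSpace ℝ (Fin N))
    (hv : Orthonormal ℝ v) (hw : Orthonormal ℝ w)
    (η : ℝ) (hη : 0 ≤ η) (hη1 : η ≤ 1)
    (hclose : ∀ i, ⟪v i, w i⟫ = 1 - η)
    (x y : Fin N → ℝ) (hx : ∀ i, x i = 1 ∨ x i = -1) (hy : ∀ i, y i = 1 ∨ y i = -1) :
    -- `⟨V, W⟩` where `V = (1/√N) ∑ᵢ xᵢ vᵢ^{⊗8}` and `W = (1/√N) ∑ᵢ yᵢ wᵢ^{⊗8}`,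
    -- and `Δ(x,y)` is the fraction of coordinates where `x` and `y` differ.
    (1 - η) ^ 8 *
        (1 - 2 * (((Finset.univ.filter fun i => x i ≠ y i).card : ℝ) / N)) - (2 * η) ^ 4
      ≤ (∑ k : Fin 8 → Fin N,
          ((1 / Real.sqrt N) * ∑ i, x i * ∏ j, v i (k j)) *
            ((1 / Real.sqrt N) * ∑ i, y i * ∏ j, w i (k j)))
    ∧ (∑ k : Fin 8 → Fin N,
          ((1 / Real.sqrt N) * ∑ i, x i * ∏ j, v i (k j)) *
            ((1 / Real.sqrt N) * ∑ i, y i * ∏ j, w i (k j)))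
      ≤ (1 - η) ^ 8 *
          (1 - 2 * (((Finset.univ.filter fun i => x i ≠ y i).card : ℝ) / N)) + (2 * η) ^ 4 := by
  classical
  have hNpos : (0:ℝ) < N := Nat.cast_pos.mpr hN
  have hN0 : (N:ℝ) ≠ 0 := ne_of_gt hNpos
  set c : Fin N → Fin N → ℝ := fun i i' => ⟪v i, w i'⟫ with hc
  -- key tensor identity
  have key : ∀ i i', (∑ k : Fin 8 → Fin N, (∏ j, v i (k j)) * (∏ j, w i' (k j))) = c i i' ^ 8 := by
    intro i i'
    calc ∑ k : Fin 8 → Fin N, (∏ j, v i (k j)) * ∏ j, w i' (k j)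
        = ∑ k ∈ Fintype.piFinset (fun _ : Fin 8 => (Finset.univ : Finset (Fin N))),
            ∏ j, (v i (k j) * w i' (k j)) := by
          rw [Fintype.piFinset_univ]
          exact Finset.sum_congr rfl fun k _ => (Finset.prod_mul_distrib).symm
      _ = ∏ _j : Fin 8, ∑ m, v i m * w i' m :=
          (Finset.prod_univ_sum (fun _ : Fin 8 => (Finset.univ : Finset (Fin N)))
            (fun _ m => v i m * w i' m)).symm
      _ = c i i' ^ 8 := by
          have : (c i i' : ℝ) = ∑ m, v i m * w i' m := by
            simp [hc, PiLp.inner_apply, RCLike.inner_apply, mul_comm]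
          rw [← this, Finset.prod_const, Finset.card_univ, Fintype.card_fin]
  -- rewrite the double sum
  have hS : (∑ k : Fin 8 → Fin N,
        ((1 / Real.sqrt N) * ∑ i, x i * ∏ j, v i (k j)) *
          ((1 / Real.sqrt N) * ∑ i, y i * ∏ j, w i (k j)))
      = (1 / N) * ∑ i, ∑ i', x i * y i' * c i i' ^ 8 := by
    have hsq : (1 / Real.sqrt N) * (1 / Real.sqrt N) = 1 / N := by
      rw [div_mul_div_comm, one_mul, Real.mul_self_sqrt hNpos.le]
    calc ∑ k : Fin 8 → Fin N,
          ((1 / Real.sqrt N) * ∑ i, x i * ∏ j, v i (k j)) *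
            ((1 / Real.sqrt N) * ∑ i, y i * ∏ j, w i (k j))
        = (1/(N:ℝ)) * ∑ k : Fin 8 → Fin N,
            (∑ i, x i * ∏ j, v i (k j)) * (∑ i, y i * ∏ j, w i (k j)) := by
          rw [Finset.mul_sum]
          exact Finset.sum_congr rfl fun k _ => by rw [← hsq]; ring
      _ = (1/N) * ∑ i, ∑ i', x i * y i' * c i i' ^ 8 := by
          congr 1
          simp_rw [Finset.sum_mul_sum]
          rw [Finset.sum_comm]
          refine Finset.sum_congr rfl fun i _ => ?_
          rw [Finset.sum_comm]
          refine Finset.sum_congr rfl fun i' _ => ?_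
          rw [← key i i', Finset.mul_sum]
          exact Finset.sum_congr rfl fun k _ => by ring
  -- diagonal sum
  have hd : ∑ i, x i * y i
      = (N : ℝ) - 2 * ((Finset.univ.filter fun i => x i ≠ y i).card : ℝ) := by
    have h1 : ∀ i, x i * y i = 1 - 2 * (if x i ≠ y i then (1:ℝ) else 0) := by
      intro i
      rcases hx i with h1|h1 <;> rcases hy i with h2|h2 <;> simp [h1, h2] <;> norm_num
    rw [Finset.sum_congr rfl fun i _ => h1 i, Finset.sum_sub_distrib, Finset.sum_const,
      ← Finset.mul_sum, Finset.sum_boole]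
    simp
  -- Parseval : w is an orthonormal basis
  haveI : Nonempty (Fin N) := Fin.pos_iff_nonempty.mp hN
  have hcard : Fintype.card (Fin N) = Module.finrank ℝ (EuclideanSpace ℝ (Fin N)) := by simp
  have hspan : ⊤ ≤ Submodule.span ℝ (Set.range w) :=
    (hw.linearIndependent.span_eq_top_of_card_eq_finrank hcard).ge
  let b : OrthonormalBasis (Fin N) ℝ (EuclideanSpace ℝ (Fin N)) := OrthonormalBasis.mk hw hspan
  have hb : ∀ i', b i' = w i' := fun i' => by simp [b]
  have hsum2 : ∀ i, ∑ i', c i i' ^ 2 = 1 := by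
    intro i
    have := b.sum_inner_mul_inner (v i) (v i)
    simp only [hb] at this
    have hvv : ⟪v i, v i⟫ = 1 := by
      rw [real_inner_self_eq_norm_sq, hv.1 i]; norm_num
    rw [hvv] at this
    rw [← this]
    refine Finset.sum_congr rfl fun i' _ => ?_
    simp only [hc]
    rw [real_inner_comm (w i') (v i), sq]
  -- off-diagonal sum of squares
  have herase : ∀ i, ∑ i' ∈ Finset.univ.erase i, c i i' ^ 2 = 1 - (1-η)^2 := by
    intro i
    have h : c i i ^ 2 + ∑ i' ∈ Finset.univ.erase i, c i i' ^ 2 = 1 := by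
      rw [Finset.add_sum_erase Finset.univ (fun i' => c i i' ^ 2) (Finset.mem_univ i)]
      exact hsum2 i
    have hcd : c i i = 1 - η := hclose i
    rw [hcd] at h
    linarith
  have h2η : ∀ i, ∀ i' ∈ Finset.univ.erase i, c i i' ^ 2 ≤ 2 * η := by
    intro i i' hi'
    have hle : c i i' ^ 2 ≤ ∑ j' ∈ Finset.univ.erase i, c i j' ^ 2 :=
      Finset.single_le_sum (f := fun j' => c i j' ^ 2) (fun j _ => sq_nonneg (c i j)) hi'
    rw [herase i] at hle
    nlinarith [sq_nonneg η]
  -- off-diagonal eighth-power bound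
  have hoff8 : ∀ i, ∑ i' ∈ Finset.univ.erase i, c i i' ^ 8 ≤ (2*η)^4 := by
    intro i
    have step : ∀ i' ∈ Finset.univ.erase i, c i i' ^ 8 ≤ (2*η)^3 * c i i' ^ 2 := by
      intro i' hi'
      have h1 : c i i' ^ 2 ≤ 2 * η := h2η i i' hi'
      have h2 : (c i i' ^ 2)^3 ≤ (2*η)^3 := pow_le_pow_left₀ (sq_nonneg _) h1 3
      calc c i i' ^ 8 = (c i i' ^ 2)^3 * c i i' ^ 2 := by ring
        _ ≤ (2*η)^3 * c i i' ^ 2 := mul_le_mul_of_nonneg_right h2 (sq_nonneg _)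
    calc ∑ i' ∈ Finset.univ.erase i, c i i' ^ 8
        ≤ ∑ i' ∈ Finset.univ.erase i, (2*η)^3 * c i i' ^ 2 := Finset.sum_le_sum step
      _ = (2*η)^3 * (1 - (1-η)^2) := by rw [← Finset.mul_sum, herase i]
      _ ≤ (2*η)^4 := by nlinarith [sq_nonneg η, pow_nonneg (by linarith : (0:ℝ) ≤ 2*η) 3]
  -- bound the error term
  have habsxy : ∀ i i', |x i * y i'| = 1 := by
    intro i i'
    rcases hx i with h1|h1 <;> rcases hy i' with h2|h2 <;> rw [h1, h2] <;> norm_num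
  have herr : ∀ i, |∑ i' ∈ Finset.univ.erase i, x i * y i' * c i i' ^ 8| ≤ (2*η)^4 := by
    intro i
    calc |∑ i' ∈ Finset.univ.erase i, x i * y i' * c i i' ^ 8|
        ≤ ∑ i' ∈ Finset.univ.erase i, |x i * y i' * c i i' ^ 8| := Finset.abs_sum_le_sum_abs _ _
      _ = ∑ i' ∈ Finset.univ.erase i, c i i' ^ 8 := by
          refine Finset.sum_congr rfl fun i' _ => ?_
          rw [abs_mul, habsxy i i', one_mul, abs_of_nonneg (by positivity)]
      _ ≤ (2*η)^4 := hoff8 i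
  -- split into diagonal and off-diagonal
  set E : ℝ := (1/N) * ∑ i, ∑ i' ∈ Finset.univ.erase i, x i * y i' * c i i' ^ 8 with hE
  have hsplit : (1 / (N:ℝ)) * ∑ i, ∑ i', x i * y i' * c i i' ^ 8
      = (1 - η) ^ 8 * (1 - 2 * (((Finset.univ.filter fun i => x i ≠ y i).card : ℝ) / N)) + E := by
    have hinner : ∀ i, ∑ i', x i * y i' * c i i' ^ 8
        = x i * y i * (1-η)^8 + ∑ i' ∈ Finset.univ.erase i, x i * y i' * c i i' ^ 8 := by
      intro i
      rw [show ((1:ℝ)-η)^8 = c i i ^ 8 from by rw [show c i i = 1-η from hclose i]]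
      exact (Finset.add_sum_erase Finset.univ (fun i' => x i * y i' * c i i' ^ 8)
        (Finset.mem_univ i)).symm
    rw [Finset.sum_congr rfl fun i _ => hinner i, Finset.sum_add_distrib, mul_add]
    have : ∑ i, x i * y i * (1-η)^8 = (1-η)^8 * ∑ i, x i * y i := by
      rw [Finset.mul_sum]; exact Finset.sum_congr rfl fun i _ => by ring
    rw [this, hd, hE]
    field_simp
  have hEbound : |E| ≤ (2*η)^4 := by
    rw [hE, abs_mul, abs_of_nonneg (by positivity : (0:ℝ) ≤ 1/(N:ℝ))]
    calc (1/(N:ℝ)) * |∑ i, ∑ i' ∈ Finset.univ.erase i, x i * y i' * c i i' ^ 8|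
        ≤ (1/(N:ℝ)) * ∑ i : Fin N, (2*η)^4 := by
          refine mul_le_mul_of_nonneg_left ?_ (by positivity)
          calc |∑ i, ∑ i' ∈ Finset.univ.erase i, x i * y i' * c i i' ^ 8|
              ≤ ∑ i, |∑ i' ∈ Finset.univ.erase i, x i * y i' * c i i' ^ 8| :=
                Finset.abs_sum_le_sum_abs _ _
            _ ≤ ∑ i : Fin N, (2*η)^4 := Finset.sum_le_sum fun i _ => herr i
      _ = (2*η)^4 := by
          rw [Finset.sum_const, Finset.card_univ, Fintype.card_fin, nsmul_eq_mul]
          field_simp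
  rw [hS, hsplit]
  rcases abs_le.mp hEbound with ⟨hE1, hE2⟩
  constructor <;> linarith
end

section
/- Let {v_i}_{i=1}^N and {w_j}_{j=1}^N be orthonormal bases of ℝ^N with max_{i,j} |⟨v_i, w_j⟩| = 1−β, and suppose the matching property ⟨v_{i₀⊕i}, w_{j₀⊕i}⟩ = ⟨v_{i₀}, w_{j₀}⟩ holds for all i (for the maximizing pair i₀, j₀, where ⊕ is the group operation of 𝔽₂^k with N = 2^k). Then for all sign vectors y, z ∈ {−1,1}^N, |(1/N) ∑_{i,j} y_i z_j ⟨v_i, w_j⟩^8| ≤ (1−β)^8 + (2β)^4. -/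
open scoped RealInnerProductSpace

/-- Coordinatewise XOR on `𝔽₂^k` modelled as `Fin k → Bool`. -/
def xorAdd {k : ℕ} (a b : Fin k → Bool) : Fin k → Bool := fun i => xor (a i) (b i)

theorem stmt_12 (k : ℕ)
    (v w : (Fin k → Bool) → EuclideanSpace ℝ (Fin k → Bool))
    (hv : Orthonormal ℝ v) (hw : Orthonormal ℝ w)
    (β : ℝ) (hβ0 : 0 ≤ β) (hβ1 : β ≤ 1)
    (i₀ j₀ : Fin k → Bool)
    (hmax : ∀ i j, |⟪v i, w j⟫| ≤ 1 - β)
    (hattain : |⟪v i₀, w j₀⟫| = 1 - β)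
    (hmatch : ∀ i, ⟪v (xorAdd i₀ i), w (xorAdd j₀ i)⟫ = ⟪v i₀, w j₀⟫)
    (y z : (Fin k → Bool) → ℝ)
    (hy : ∀ i, y i = 1 ∨ y i = -1) (hz : ∀ j, z j = 1 ∨ z j = -1) :
    |(1 / (2 : ℝ) ^ k) * ∑ i : Fin k → Bool, ∑ j : Fin k → Bool,
        y i * z j * ⟪v i, w j⟫ ^ 8|
      ≤ (1 - β) ^ 8 + (2 * β) ^ 4 := by
  classical
  have key : ∀ i : Fin k → Bool, ∑ j : Fin k → Bool, ⟪v i, w j⟫ ^ 8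
      ≤ (1 - β) ^ 8 + (2 * β) ^ 4 := by
    intro i
    set ji := xorAdd j₀ (xorAdd i₀ i) with hji
    have hxor : xorAdd i₀ (xorAdd i₀ i) = i := by
      funext t; simp [xorAdd]
    have hm : ⟪v i, w ji⟫ = ⟪v i₀, w j₀⟫ := by
      have := hmatch (xorAdd i₀ i)
      rwa [hxor] at this
    have habs : |⟪v i, w ji⟫| = 1 - β := by rw [hm]; exact hattain
    have hpow8 : ⟪v i, w ji⟫ ^ 8 = (1 - β) ^ 8 := by
      have h8 : ⟪v i, w ji⟫ ^ 8 = |⟪v i, w ji⟫| ^ 8 := by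
        rw [← abs_pow, abs_of_nonneg (by positivity)]
      rw [h8, habs]
    have hpow2 : ⟪v i, w ji⟫ ^ 2 = (1 - β) ^ 2 := by
      have h2 : ⟪v i, w ji⟫ ^ 2 = |⟪v i, w ji⟫| ^ 2 := (sq_abs _).symm
      rw [h2, habs]
    have bessel : ∑ j : Fin k → Bool, ⟪v i, w j⟫ ^ 2 ≤ 1 := by
      have h := hw.sum_inner_products_le (x := v i) (s := Finset.univ)
      have hn : ‖v i‖ = 1 := hv.1 i
      calc ∑ j : Fin k → Bool, ⟪v i, w j⟫ ^ 2
          = ∑ j : Fin k → Bool, ‖⟪w j, v i⟫‖ ^ 2 := by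
            refine Finset.sum_congr rfl fun j _ => ?_
            rw [real_inner_comm, Real.norm_eq_abs, sq_abs]
        _ ≤ ‖v i‖ ^ 2 := h
        _ = 1 := by rw [hn]; norm_num
    -- sum over j ≠ ji of squares
    have hrest2 : ∑ j ∈ Finset.univ.erase ji, ⟪v i, w j⟫ ^ 2 ≤ 2 * β := by
      have hsplit : ⟪v i, w ji⟫ ^ 2 + ∑ j ∈ Finset.univ.erase ji, ⟪v i, w j⟫ ^ 2
          = ∑ j : Fin k → Bool, ⟪v i, w j⟫ ^ 2 :=
        Finset.add_sum_erase _ (fun j => ⟪v i, w j⟫ ^ 2) (Finset.mem_univ ji)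
      have : ∑ j ∈ Finset.univ.erase ji, ⟪v i, w j⟫ ^ 2 ≤ 1 - (1 - β) ^ 2 := by
        nlinarith [bessel, hsplit, hpow2]
      nlinarith [sq_nonneg β]
    have hrest2' : (0:ℝ) ≤ ∑ j ∈ Finset.univ.erase ji, ⟪v i, w j⟫ ^ 2 :=
      Finset.sum_nonneg fun j _ => sq_nonneg _
    have hrest8 : ∑ j ∈ Finset.univ.erase ji, ⟪v i, w j⟫ ^ 8
        ≤ (2 * β) ^ 4 := by
      set S := ∑ j ∈ Finset.univ.erase ji, ⟪v i, w j⟫ ^ 2 with hS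
      have h1 : ∑ j ∈ Finset.univ.erase ji, ⟪v i, w j⟫ ^ 8 ≤ S ^ 4 := by
        have : ∀ j ∈ Finset.univ.erase ji,
            ⟪v i, w j⟫ ^ 8 ≤ ⟪v i, w j⟫ ^ 2 * S ^ 3 := by
          intro j hj
          have hle : ⟪v i, w j⟫ ^ 2 ≤ S :=
            Finset.single_le_sum (f := fun j => ⟪v i, w j⟫ ^ 2)
              (fun j _ => sq_nonneg _) hj
          have h3 : (⟪v i, w j⟫ ^ 2) ^ 3 ≤ S ^ 3 :=
            pow_le_pow_left₀ (sq_nonneg _) hle 3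
          calc ⟪v i, w j⟫ ^ 8 = ⟪v i, w j⟫ ^ 2 * (⟪v i, w j⟫ ^ 2) ^ 3 := by ring
            _ ≤ ⟪v i, w j⟫ ^ 2 * S ^ 3 := by
                exact mul_le_mul_of_nonneg_left h3 (sq_nonneg _)
        calc ∑ j ∈ Finset.univ.erase ji, ⟪v i, w j⟫ ^ 8
            ≤ ∑ j ∈ Finset.univ.erase ji, ⟪v i, w j⟫ ^ 2 * S ^ 3 :=
              Finset.sum_le_sum this
          _ = S * S ^ 3 := by rw [← Finset.sum_mul]
          _ = S ^ 4 := by ring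
      have h2 : S ^ 4 ≤ (2 * β) ^ 4 := pow_le_pow_left₀ hrest2' hrest2 4
      linarith
    calc ∑ j : Fin k → Bool, ⟪v i, w j⟫ ^ 8
        = ⟪v i, w ji⟫ ^ 8 + ∑ j ∈ Finset.univ.erase ji, ⟪v i, w j⟫ ^ 8 :=
          (Finset.add_sum_erase _ (fun j => ⟪v i, w j⟫ ^ 8) (Finset.mem_univ ji)).symm
      _ ≤ (1 - β) ^ 8 + (2 * β) ^ 4 := by rw [hpow8]; linarith
  have habs1 : ∀ i j : Fin k → Bool, |y i * z j * ⟪v i, w j⟫ ^ 8| = ⟪v i, w j⟫ ^ 8 := by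
    intro i j
    have hyi : |y i| = 1 := by rcases hy i with h | h <;> simp [h]
    have hzj : |z j| = 1 := by rcases hz j with h | h <;> simp [h]
    rw [abs_mul, abs_mul, hyi, hzj,
      abs_of_nonneg (by positivity : (0:ℝ) ≤ ⟪v i, w j⟫ ^ 8)]
    ring
  have hbound : |∑ i : Fin k → Bool, ∑ j : Fin k → Bool, y i * z j * ⟪v i, w j⟫ ^ 8|
      ≤ (2:ℝ) ^ k * ((1 - β) ^ 8 + (2 * β) ^ 4) := by
    calc |∑ i : Fin k → Bool, ∑ j : Fin k → Bool, y i * z j * ⟪v i, w j⟫ ^ 8|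
        ≤ ∑ i : Fin k → Bool, |∑ j : Fin k → Bool, y i * z j * ⟪v i, w j⟫ ^ 8| :=
          Finset.abs_sum_le_sum_abs _ _
      _ ≤ ∑ i : Fin k → Bool, ∑ j : Fin k → Bool, |y i * z j * ⟪v i, w j⟫ ^ 8| :=
          Finset.sum_le_sum fun i _ => Finset.abs_sum_le_sum_abs _ _
      _ = ∑ i : Fin k → Bool, ∑ j : Fin k → Bool, ⟪v i, w j⟫ ^ 8 := by
          refine Finset.sum_congr rfl fun i _ => Finset.sum_congr rfl fun j _ => habs1 i j
      _ ≤ ∑ _i : Fin k → Bool, ((1 - β) ^ 8 + (2 * β) ^ 4) :=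
          Finset.sum_le_sum fun i _ => key i
      _ = (2:ℝ) ^ k * ((1 - β) ^ 8 + (2 * β) ^ 4) := by
          rw [Finset.sum_const, Finset.card_univ]
          simp [Fintype.card_fun]
          ring
  have h2k : (0:ℝ) < (2:ℝ) ^ k := by positivity
  rw [abs_mul, abs_of_nonneg (by positivity : (0:ℝ) ≤ 1 / (2:ℝ) ^ k)]
  rw [div_mul_eq_mul_div, one_mul, div_le_iff₀ h2k]
  calc |∑ i : Fin k → Bool, ∑ j : Fin k → Bool, y i * z j * ⟪v i, w j⟫ ^ 8|
      ≤ (2:ℝ) ^ k * ((1 - β) ^ 8 + (2 * β) ^ 4) := hbound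
    _ = ((1 - β) ^ 8 + (2 * β) ^ 4) * (2:ℝ) ^ k := by ring
end
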